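/- For every natural number d ≥ 1 and every k with 0 ≤ k ≤ d, the quantity p_k(d) = ∑_{s=k}^{d} (-1)^{k+s}/s! * C(s,k) is nonnegative. -/

import Mathlib

/-- The limiting intersection probability `p_k(d)` as a real number. -/
noncomputable def interProb (d k : ℕ) : ℝ :=
  ∑ s ∈ Finset.Icc k d, ((-1 : ℝ) ^ (k + s) / (Nat.factorial s)) * (s.choose k)

private noncomputable def altF (n : ℕ) : ℝ :=
  ∑ j ∈ Finset.range (n + 1), (-1 : ℝ) ^ j / (Nat.factorial j)

private lemma altF_succ (n : ℕ) :
    altF (n + 1) = altF n + (-1 : ℝ) ^ (n + 1) / (Nat.factorial (n + 1)) := by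
  simp [altF, Finset.sum_range_succ]

private lemma altF_odd_nonneg (m : ℕ) : 0 ≤ altF (2 * m + 1) := by
  induction m with
  | zero => norm_num [altF, Finset.sum_range_succ]
  | succ m ih =>
    have h1 : 2 * (m + 1) + 1 = (2 * m + 1 + 1) + 1 := by ring
    rw [h1, altF_succ, altF_succ]
    have hfac : (Nat.factorial (2 * m + 1 + 1) : ℝ) ≤ Nat.factorial (2 * m + 1 + 1 + 1) := by
      exact_mod_cast Nat.factorial_le (by omega)
    have hpos : (0:ℝ) < Nat.factorial (2 * m + 1 + 1) := by positivity
    have hpos2 : (0:ℝ) < Nat.factorial (2 * m + 1 + 1 + 1) := by positivity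
    have h2 : (1:ℝ) / Nat.factorial (2 * m + 1 + 1 + 1) ≤ 1 / Nat.factorial (2 * m + 1 + 1) :=
      one_div_le_one_div_of_le hpos hfac
    have e1 : ((-1 : ℝ)) ^ (2 * m + 1 + 1) = 1 := by
      rw [show 2 * m + 1 + 1 = 2 * (m + 1) by ring]; simp [pow_mul]
    have e2 : ((-1 : ℝ)) ^ (2 * m + 1 + 1 + 1) = -1 := by
      rw [show 2 * m + 1 + 1 + 1 = 2 * (m + 1) + 1 by ring]; simp [pow_mul, pow_succ]
    rw [e1, e2]
    simp only [show 2 * m + 1 + 1 + 1 = 2 * m + 2 + 1 from by ring] at h2 hpos2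
    simp only [show 2 * m + 1 + 1 = 2 * m + 2 from by ring] at hpos h2
    have hgoal : altF (2 * m + 1) + 1 / ↑(Nat.factorial (2 * m + 2)) +
        -1 / ↑(Nat.factorial (2 * m + 2 + 1)) ≥ 0 := by
      rw [neg_div]
      linarith
    convert hgoal using 2

private lemma altF_nonneg (n : ℕ) : 0 ≤ altF n := by
  rcases Nat.even_or_odd n with ⟨m, hm⟩ | ⟨m, hm⟩
  · subst hm
    have h := altF_odd_nonneg m
    rw [show m + m = 2 * m by ring]
    have hs : altF (2 * m + 1) = altF (2 * m) + (-1 : ℝ) ^ (2 * m + 1) / Nat.factorial (2 * m + 1) :=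
      altF_succ (2 * m)
    have e : ((-1 : ℝ)) ^ (2 * m + 1) = -1 := by simp [pow_succ, pow_mul]
    rw [e, neg_div] at hs
    have hpos : (0:ℝ) < Nat.factorial (2 * m + 1) := by positivity
    have hle : (0:ℝ) < 1 / Nat.factorial (2 * m + 1) := by positivity
    nlinarith [h, hs, hle]
  · subst hm
    exact altF_odd_nonneg m

theorem interProb_nonneg (d k : ℕ) (hd : 1 ≤ d) (hk : k ≤ d) :
    0 ≤ interProb d k := by
  have key : interProb d k = (1 / (Nat.factorial k : ℝ)) * altF (d - k) := by
    rw [interProb, altF, ← Finset.Ico_add_one_right_eq_Icc, Finset.sum_Ico_eq_sum_range, Finset.mul_sum]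
    rw [show d + 1 - k = d - k + 1 by omega]
    refine Finset.sum_congr rfl fun j hj => ?_
    have hchoose : ((k + j).choose k) * (Nat.factorial k) * (Nat.factorial j) =
        Nat.factorial (k + j) := by
      have := Nat.choose_mul_factorial_mul_factorial (Nat.le_add_right k j)
      simpa [Nat.add_sub_cancel_left] using this
    have hc : ((k + j).choose k : ℝ) * (Nat.factorial k) * (Nat.factorial j) =
        Nat.factorial (k + j) := by exact_mod_cast hchoose
    have hsign : ((-1 : ℝ)) ^ (k + (k + j)) = (-1 : ℝ) ^ j := by
      rw [show k + (k + j) = 2 * k + j by ring, pow_add, pow_mul]; simp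
    rw [hsign]
    have hk0 : (Nat.factorial k : ℝ) ≠ 0 := by positivity
    have hj0 : (Nat.factorial j : ℝ) ≠ 0 := by positivity
    have hkj0 : (Nat.factorial (k + j) : ℝ) ≠ 0 := by positivity
    field_simp
    linear_combination hc
  rw [key]
  have h1 : (0:ℝ) ≤ 1 / (Nat.factorial k : ℝ) := by positivity
  exact mul_nonneg h1 (altF_nonneg _)
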